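/- arXiv:math/0206042 — 4 statements merged into one kernel-verified Lean document; each statement's English description precedes it below -/
import Mathlib

section
/- Let H be a complex Hilbert space, let N be a normal bounded operator on H, and let P be a bounded operator on H with N P = P N. Then N* P = P N* as well. -/
open NormedSpace

set_option maxHeartbeats 1000000

/-- `exp` of a skew-adjoint operator has norm one (when the space is nontrivial). -/
lemma norm_exp_skewAdjoint {H : Type*} [NormedAddCommGroup H] [InnerProductSpace ℂ H]
    [CompleteSpace H] [Nontrivial H] {S : H →L[ℂ] H} (hS : S ∈ skewAdjoint (H →L[ℂ] H)) :
    ‖exp S‖ = 1 := by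
  let +nondep : NormedAlgebra ℚ (H →L[ℂ] H) := .restrictScalars ℚ ℂ (H →L[ℂ] H)
  exact CStarRing.norm_of_mem_unitary (exp_mem_unitary_of_mem_skewAdjoint hS)

/-- Fuglede's theorem: if a bounded operator `P` on a complex Hilbert space commutes with a
normal bounded operator `N`, then `P` also commutes with the adjoint `N*`. -/
theorem stmt3 {H : Type*} [NormedAddCommGroup H] [InnerProductSpace ℂ H] [CompleteSpace H]
    (N P : H →L[ℂ] H) (hN : IsStarNormal N)
    (h : N ∘L P = P ∘L N) :
    ContinuousLinearMap.adjoint N ∘L P = P ∘L ContinuousLinearMap.adjoint N := by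
  let +nondep : NormedAlgebra ℚ (H →L[ℂ] H) := .restrictScalars ℚ ℂ (H →L[ℂ] H)
  rcases subsingleton_or_nontrivial H with hH | hH
  · exact Subsingleton.elim _ _
  rw [← ContinuousLinearMap.star_eq_adjoint]
  change star N * P = P * star N
  have hcomm : Commute N P := h
  have hnorm : Commute (star N) N := hN.star_comm_self
  set M := star N with hM
  have hdiff : Differentiable ℂ fun z : ℂ => exp (z • M) * P * exp ((-z) • M) := by
    have h1 : Differentiable ℂ fun z : ℂ => exp (z • M) :=
      fun z => (hasDerivAt_exp_smul_const M z).differentiableAt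
    have h2 : Differentiable ℂ fun z : ℂ => exp ((-z) • M) :=
      h1.comp (differentiable_neg : Differentiable ℂ (fun z : ℂ => -z))
    exact (h1.mul (differentiable_const P)).mul h2
  have hbdd : Bornology.IsBounded
      (Set.range fun z : ℂ => exp (z • M) * P * exp ((-z) • M)) := by
    rw [Metric.isBounded_iff_subset_closedBall 0]
    refine ⟨‖P‖, ?_⟩
    rintro _ ⟨z, rfl⟩
    simp only [Metric.mem_closedBall, dist_zero_right]
    have hPz : ∀ w : ℂ, Commute P (exp (w • N)) :=
      fun w => ((hcomm.symm.smul_right w).exp_right)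
    set c := starRingEnd ℂ z with hc
    have hc1 : Commute (z • M) (-(c • N)) := ((hnorm.smul_left z).smul_right c).neg_right
    have hc2 : Commute (c • N) (-(z • M)) := ((hnorm.symm.smul_left c).smul_right z).neg_right
    have e1 : exp (z • M - c • N) = exp (z • M) * exp (-(c • N)) := by
      rw [sub_eq_add_neg, exp_add_of_commute hc1]
    have e2 : exp (c • N - z • M) = exp (c • N) * exp (-(z • M)) := by
      rw [sub_eq_add_neg, exp_add_of_commute hc2]
    have hP' : exp (-(c • N)) * P * exp (c • N) = P := by
      rw [mul_assoc, ← (hPz c).symm.eq, ← mul_assoc,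
        ← exp_add_of_commute (Commute.refl (c • N)).neg_left]
      simp
    have key : exp (z • M) * P * exp ((-z) • M)
        = exp (z • M - c • N) * P * exp (c • N - z • M) := by
      rw [e1, e2]
      calc exp (z • M) * P * exp ((-z) • M)
          = exp (z • M) * (exp (-(c • N)) * P * exp (c • N)) * exp (-(z • M)) := by
            rw [hP', neg_smul]
        _ = exp (z • M) * exp (-(c • N)) * P * (exp (c • N) * exp (-(z • M))) := by
            simp only [mul_assoc]
    rw [key]
    have hskew : z • M - c • N ∈ skewAdjoint (H →L[ℂ] H) := by
      rw [skewAdjoint.mem_iff, star_sub, star_smul, star_smul, star_star, neg_sub, hM, hc]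
      simp [RCLike.star_def]
    have hskew2 : c • N - z • M ∈ skewAdjoint (H →L[ℂ] H) := by
      rw [skewAdjoint.mem_iff, star_sub, star_smul, star_smul, star_star, neg_sub, hM, hc]
      simp [RCLike.star_def]
    calc ‖exp (z • M - c • N) * P * exp (c • N - z • M)‖
        ≤ ‖exp (z • M - c • N) * P‖ * ‖exp (c • N - z • M)‖ := norm_mul_le _ _
      _ ≤ ‖exp (z • M - c • N)‖ * ‖P‖ * ‖exp (c • N - z • M)‖ :=
          mul_le_mul_of_nonneg_right (norm_mul_le _ _) (norm_nonneg _)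
      _ = ‖P‖ := by rw [norm_exp_skewAdjoint hskew, norm_exp_skewAdjoint hskew2]; ring
  have hconst : ∀ z : ℂ, exp (z • M) * P * exp ((-z) • M)
      = exp ((0 : ℂ) • M) * P * exp ((-(0 : ℂ)) • M) :=
    fun z => hdiff.apply_eq_apply_of_bounded hbdd z 0
  have hcomm' : ∀ z : ℂ, exp (z • M) * P = P * exp (z • M) := by
    intro z
    have h0 := hconst z
    simp only [zero_smul, neg_zero, exp_zero, one_mul, mul_one] at h0
    have hinv : exp ((-z) • M) * exp (z • M) = 1 := by
      rw [← exp_add_of_commute (((Commute.refl M).smul_left (-z)).smul_right z)]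
      simp
    calc exp (z • M) * P
        = exp (z • M) * P * (exp ((-z) • M) * exp (z • M)) := by rw [hinv, mul_one]
      _ = (exp (z • M) * P * exp ((-z) • M)) * exp (z • M) := by simp only [mul_assoc]
      _ = P * exp (z • M) := by rw [h0]
  have hd1 : HasDerivAt (fun z : ℂ => exp (z • M) * P) (M * P) 0 := by
    have := (hasDerivAt_exp_smul_const M (0:ℂ)).mul_const P
    simpa using this
  have hd2 : HasDerivAt (fun z : ℂ => exp (z • M) * P) (P * M) 0 := by
    have := (hasDerivAt_exp_smul_const M (0:ℂ)).const_mul P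
    simp only [zero_smul, exp_zero, mul_one] at this
    exact this.congr_of_eventuallyEq (Filter.Eventually.of_forall fun z => (hcomm' z))
  exact hd1.unique hd2
end

section
/- Let Ω be a compact Hausdorff space, ν a complex regular Borel measure on Ω, H = L²(|ν|), and A a closed unital point-separating subalgebra of C(Ω). Let K be the closure of (the image of) A in H, and suppose there exists a bounded projection P : H → H with range K satisfying M_f P = P M_f for all f ∈ A, where M_f is multiplication by f. Then K = H. -/
open MeasureTheory

/-- A complex regular Borel measure, encoded via its polar decomposition. -/
structure ComplexRegularBorelMeasure (Ω : Type*) [TopologicalSpace Ω] [MeasurableSpace Ω] where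
  variation : Measure Ω
  polar : Ω → ℂ
  finite : IsFiniteMeasure variation
  regular : variation.Regular
  measurable_polar : Measurable polar
  norm_polar : ∀ᵐ x ∂variation, ‖polar x‖ = 1

/-- `T` is the operator of multiplication by `f` on `L²(μ)`. -/
def IsMulOp {Ω : Type*} [MeasurableSpace Ω] (μ : Measure Ω) (f : Ω → ℂ)
    (T : Lp ℂ 2 μ →L[ℂ] Lp ℂ 2 μ) : Prop :=
  ∀ ξ : Lp ℂ 2 μ, (⇑(T ξ) : Ω → ℂ) =ᵐ[μ] fun x => f x * ξ x

open Filter Set NormedSpace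
open scoped ENNReal NNReal

set_option linter.unusedSectionVars false
set_option maxHeartbeats 1000000
noncomputable section
namespace SheinAux

variable {Ω : Type*} [TopologicalSpace Ω] [CompactSpace Ω]
  [MeasurableSpace Ω] [BorelSpace Ω]
  (μ : Measure Ω) [IsFiniteMeasure μ]

lemma memLp_mul (g : C(Ω, ℂ)) (ξ : Lp ℂ 2 μ) :
    MemLp (fun x => g x * ξ x) 2 μ := by
  have hg : MemLp (⇑g) ∞ μ :=
    memLp_top_of_bound g.continuous.aestronglyMeasurable ‖g‖
      (Eventually.of_forall fun x => g.norm_coe_le_norm x)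
  have := (Lp.memLp ξ).mul' (r := 2) hg
  simpa [Pi.smul_def, smul_eq_mul, mul_comm] using this

lemma norm_toLp_mul_le (g : C(Ω, ℂ)) (ξ : Lp ℂ 2 μ) :
    ‖(memLp_mul μ g ξ).toLp _‖ ≤ ‖g‖ * ‖ξ‖ := by
  rw [Lp.norm_toLp]
  have h1 : eLpNorm (fun x => g x * ξ x) 2 μ
      ≤ eLpNorm ((‖g‖ : ℂ) • (⇑ξ : Ω → ℂ)) 2 μ := by
    refine eLpNorm_mono fun x => ?_
    simp only [Pi.smul_apply, smul_eq_mul, norm_mul, Complex.norm_real,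
      Real.norm_eq_abs, abs_of_nonneg (norm_nonneg g)]
    exact mul_le_mul_of_nonneg_right (g.norm_coe_le_norm x) (norm_nonneg _)
  have h2 : eLpNorm ((‖g‖ : ℂ) • (⇑ξ : Ω → ℂ)) 2 μ = ‖(‖g‖ : ℂ)‖₊ • eLpNorm (⇑ξ) 2 μ :=
    eLpNorm_const_smul _ _ _ _
  calc (eLpNorm (fun x => g x * ξ x) 2 μ).toReal
      ≤ ((‖(‖g‖ : ℂ)‖₊ : ℝ≥0∞) * eLpNorm (⇑ξ) 2 μ).toReal := by
        refine ENNReal.toReal_mono ?_ (h1.trans_eq (by simpa [ENNReal.smul_def] using h2))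
        exact ENNReal.mul_ne_top ENNReal.coe_ne_top (Lp.eLpNorm_lt_top ξ).ne
    _ = ‖g‖ * ‖ξ‖ := by
        rw [ENNReal.toReal_mul, ENNReal.coe_toReal, coe_nnnorm, Lp.norm_def]
        simp [abs_of_nonneg (norm_nonneg g)]

/-- Multiplication by a continuous function, as a continuous linear map on `L²`. -/
def mulOp (g : C(Ω, ℂ)) : Lp ℂ 2 μ →L[ℂ] Lp ℂ 2 μ :=
  LinearMap.mkContinuous
    { toFun := fun ξ => (memLp_mul μ g ξ).toLp _
      map_add' := fun ξ η => by
        apply Lp.ext (p := 2)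
        filter_upwards [(memLp_mul μ g (ξ + η)).coeFn_toLp, (memLp_mul μ g ξ).coeFn_toLp,
          (memLp_mul μ g η).coeFn_toLp, Lp.coeFn_add ξ η,
          Lp.coeFn_add ((memLp_mul μ g ξ).toLp _) ((memLp_mul μ g η).toLp _)]
          with x h1 h2 h3 h4 h5
        simp only [h1, h5, Pi.add_apply, h2, h3, h4, mul_add]
      map_smul' := fun c ξ => by
        apply Lp.ext (p := 2)
        filter_upwards [(memLp_mul μ g (c • ξ)).coeFn_toLp, (memLp_mul μ g ξ).coeFn_toLp,
          Lp.coeFn_smul c ξ, Lp.coeFn_smul c ((memLp_mul μ g ξ).toLp _)]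
          with x h1 h2 h3 h4
        simp only [h1, RingHom.id_apply, h4, Pi.smul_apply, h2, h3, smul_eq_mul]
        ring }
    ‖g‖ (fun ξ => norm_toLp_mul_le μ g ξ)

lemma coeFn_mulOp (g : C(Ω, ℂ)) (ξ : Lp ℂ 2 μ) :
    (⇑(mulOp μ g ξ) : Ω → ℂ) =ᵐ[μ] fun x => g x * ξ x :=
  (memLp_mul μ g ξ).coeFn_toLp

lemma norm_mulOp_le (g : C(Ω, ℂ)) : ‖mulOp μ g‖ ≤ ‖g‖ :=
  LinearMap.mkContinuous_norm_le _ (norm_nonneg g) _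


lemma mulOp_one : mulOp μ (1 : C(Ω, ℂ)) = 1 := by
  refine ContinuousLinearMap.ext fun ξ => ?_
  apply Lp.ext (p := 2)
  filter_upwards [coeFn_mulOp μ 1 ξ] with x h1
  simpa using h1

lemma mulOp_mul (g h : C(Ω, ℂ)) : mulOp μ (g * h) = mulOp μ g * mulOp μ h := by
  refine ContinuousLinearMap.ext fun ξ => ?_
  apply Lp.ext (p := 2)
  filter_upwards [coeFn_mulOp μ (g * h) ξ, coeFn_mulOp μ g (mulOp μ h ξ),
    coeFn_mulOp μ h ξ] with x h1 h2 h3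
  simp only [h1, ContinuousLinearMap.mul_apply, h2, h3, ContinuousMap.mul_apply, mul_assoc]

lemma mulOp_add (g h : C(Ω, ℂ)) : mulOp μ (g + h) = mulOp μ g + mulOp μ h := by
  refine ContinuousLinearMap.ext fun ξ => ?_
  apply Lp.ext (p := 2)
  filter_upwards [coeFn_mulOp μ (g + h) ξ, coeFn_mulOp μ g ξ, coeFn_mulOp μ h ξ,
    Lp.coeFn_add (mulOp μ g ξ) (mulOp μ h ξ)] with x h1 h2 h3 h4
  simp only [h1, ContinuousLinearMap.add_apply, h4, Pi.add_apply, h2, h3,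
    ContinuousMap.add_apply, add_mul]

lemma mulOp_smul (c : ℂ) (g : C(Ω, ℂ)) : mulOp μ (c • g) = c • mulOp μ g := by
  refine ContinuousLinearMap.ext fun ξ => ?_
  apply Lp.ext (p := 2)
  filter_upwards [coeFn_mulOp μ (c • g) ξ, coeFn_mulOp μ g ξ,
    Lp.coeFn_smul c (mulOp μ g ξ)] with x h1 h2 h3
  rw [h1, show (c • mulOp μ g) ξ = c • mulOp μ g ξ from rfl, h3]
  simp only [Pi.smul_apply, h2, ContinuousMap.smul_apply, smul_eq_mul]
  ring

/-- Multiplication as an algebra homomorphism `C(Ω, ℂ) →ₐ[ℂ] B(L²(μ))`. -/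
def mulHom : C(Ω, ℂ) →ₐ[ℂ] (Lp ℂ 2 μ →L[ℂ] Lp ℂ 2 μ) :=
  AlgHom.ofLinearMap
    { toFun := mulOp μ
      map_add' := mulOp_add μ
      map_smul' := mulOp_smul μ }
    (mulOp_one μ) (mulOp_mul μ)

@[simp] lemma mulHom_apply (g : C(Ω, ℂ)) : mulHom μ g = mulOp μ g := rfl

lemma continuous_mulHom : Continuous (mulHom μ) := by
  have : LipschitzWith 1 (mulHom μ) := by
    refine LipschitzWith.of_dist_le_mul fun g h => ?_
    rw [dist_eq_norm, dist_eq_norm, ← map_sub, NNReal.coe_one, one_mul]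
    exact norm_mulOp_le μ (g - h)
  exact this.continuous

lemma isMulOp_mulHom (g : C(Ω, ℂ)) : ∀ ξ : Lp ℂ 2 μ,
    (⇑(mulHom μ g ξ) : Ω → ℂ) =ᵐ[μ] fun x => g x * ξ x :=
  coeFn_mulOp μ g

/-- If a continuous function has purely imaginary values, its exponential has norm at most 1. -/
lemma norm_exp_le_one (k : C(Ω, ℂ)) (hk : ∀ x, (k x).re = 0) : ‖exp k‖ ≤ 1 := by
  letI : NormedAlgebra ℚ C(Ω, ℂ) := NormedAlgebra.restrictScalars ℚ ℂ _
  refine (ContinuousMap.norm_le _ zero_le_one).mpr fun x => ?_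
  have hx : (exp k) x = exp (k x) :=
    map_exp (ContinuousMap.evalAlgHom ℂ ℂ x) (continuous_eval_const x) k
  rw [hx, ← Complex.exp_eq_exp_ℂ, Complex.norm_exp, hk, Real.exp_zero]


lemma re_k_eq_zero (z : ℂ) (g : C(Ω, ℂ)) (x : Ω) :
    ((((starRingEnd ℂ) z) • g - z • star g) x).re = 0 := by
  have h : ((starRingEnd ℂ) z) * g x = (starRingEnd ℂ) (z * (starRingEnd ℂ) (g x)) := by
    rw [map_mul, RingHomCompTriple.comp_apply]
    simp
  simp only [ContinuousMap.sub_apply, ContinuousMap.smul_apply, smul_eq_mul,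
    ContinuousMap.star_apply, Complex.star_def, Complex.sub_re, h, Complex.conj_re, sub_self]

/-- Fuglede's commutation theorem for multiplication operators: if `T` commutes with
multiplication by `g`, then it commutes with multiplication by `conj g`. -/
lemma fuglede (T : Lp ℂ 2 μ →L[ℂ] Lp ℂ 2 μ) (g : C(Ω, ℂ))
    (hT : mulHom μ g * T = T * mulHom μ g) :
    mulHom μ (star g) * T = T * mulHom μ (star g) := by
  letI : NormedAlgebra ℚ C(Ω, ℂ) := NormedAlgebra.restrictScalars ℚ ℂ _
  letI : NormedAlgebra ℚ (Lp ℂ 2 μ →L[ℂ] Lp ℂ 2 μ) := NormedAlgebra.restrictScalars ℚ ℂ _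
  set Φ := mulHom μ with hΦ
  set N := Φ g with hN
  set M := Φ (star g) with hM
  have hcomm : Commute N T := hT
  have hNM : Commute N M := by
    rw [hN, hM, Commute, SemiconjBy, ← map_mul, ← map_mul, mul_comm]
  have hexp1 : ∀ w : ℂ, exp (w • M) * exp ((-w) • M) = 1 := by
    intro w
    rw [← exp_add_of_commute (((Commute.refl M).smul_left w).smul_right (-w))]
    rw [neg_smul, add_neg_cancel, exp_zero]
  set F : ℂ → (Lp ℂ 2 μ →L[ℂ] Lp ℂ 2 μ) :=
    fun z => exp ((-z) • M) * T * exp (z • M) with hF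
  have hFdiff : Differentiable ℂ F := by
    have h1 : Differentiable ℂ fun z : ℂ => exp (z • M) :=
      fun z => (hasDerivAt_exp_smul_const (𝕂 := ℂ) M z).differentiableAt
    have h2 : Differentiable ℂ fun z : ℂ => exp ((-z) • M) := h1.comp differentiable_neg
    exact (h2.mul (differentiable_const T)).mul h1
  have hbound : ∀ z : ℂ, ‖F z‖ ≤ ‖T‖ := by
    intro z
    set w := (starRingEnd ℂ) z with hw
    set k : C(Ω, ℂ) := w • g - z • star g with hk
    have hΦk : Φ k = w • N - z • M := by rw [hk, map_sub, _root_.map_smul, _root_.map_smul]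
    have hTw : T * exp (w • N) = exp (w • N) * T :=
      (((hcomm.symm).smul_right w).exp_right).eq
    have hexpN : ∀ u : ℂ, exp (u • N) * exp ((-u) • N) = 1 := by
      intro u
      rw [← exp_add_of_commute (((Commute.refl N).smul_left u).smul_right (-u))]
      rw [neg_smul, add_neg_cancel, exp_zero]
    have hTfix : exp (w • N) * T * exp ((-w) • N) = T := by
      rw [← hTw, mul_assoc, hexpN w, mul_one]
    have e1 : F z = (exp ((-z) • M) * exp (w • N)) * T *
        (exp ((-w) • N) * exp (z • M)) := by
      conv_lhs => rw [hF]; rw [← hTfix]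
      simp only [mul_assoc]
    have e2 : exp ((-z) • M) * exp (w • N) = Φ (exp k) := by
      rw [← exp_add_of_commute (((hNM.symm).smul_left (-z)).smul_right w),
        map_exp Φ (continuous_mulHom μ), hΦk, sub_eq_add_neg, ← neg_smul]
      exact congrArg _ (add_comm _ _)
    have e3 : exp ((-w) • N) * exp (z • M) = Φ (exp (-k)) := by
      rw [← exp_add_of_commute ((hNM.smul_left (-w)).smul_right z),
        map_exp Φ (continuous_mulHom μ), map_neg, hΦk, neg_sub, sub_eq_add_neg, ← neg_smul]
      exact congrArg _ (add_comm _ _)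
    have hek : ‖Φ (exp k)‖ ≤ 1 := by
      refine (norm_mulOp_le μ _).trans ?_
      exact norm_exp_le_one _ (fun x => re_k_eq_zero z g x)
    have hek' : ‖Φ (exp (-k))‖ ≤ 1 := by
      refine (norm_mulOp_le μ _).trans ?_
      refine norm_exp_le_one _ (fun x => ?_)
      have := re_k_eq_zero z g x
      simp only [ContinuousMap.neg_apply, Complex.neg_re, hk]
      rw [this, neg_zero]
    calc ‖F z‖ = ‖Φ (exp k) * T * Φ (exp (-k))‖ := by rw [e1, e2, e3]
      _ ≤ ‖Φ (exp k) * T‖ * ‖Φ (exp (-k))‖ := norm_mul_le _ _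
      _ ≤ ‖Φ (exp k)‖ * ‖T‖ * ‖Φ (exp (-k))‖ := by
          gcongr
          exact norm_mul_le _ _
      _ ≤ 1 * ‖T‖ * 1 := by gcongr
      _ = ‖T‖ := by ring
  have hbdd : Bornology.IsBounded (Set.range F) := by
    refine isBounded_iff_forall_norm_le.mpr ⟨‖T‖, ?_⟩
    rintro _ ⟨z, rfl⟩
    exact hbound z
  have hF0 : F 0 = T := by
    simp only [hF, neg_zero, zero_smul, exp_zero, one_mul, mul_one]
  have hcommexp : ∀ z : ℂ, T * exp (z • M) = exp (z • M) * T := by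
    intro z
    have h := hFdiff.apply_eq_apply_of_bounded hbdd z 0
    rw [hF0] at h
    have step : exp (z • M) * (exp ((-z) • M) * T * exp (z • M)) = T * exp (z • M) := by
      calc exp (z • M) * (exp ((-z) • M) * T * exp (z • M))
          = (exp (z • M) * exp ((-z) • M)) * T * exp (z • M) := by
            simp only [mul_assoc]
        _ = T * exp (z • M) := by rw [hexp1 z, one_mul]
    rw [show exp ((-z) • M) * T * exp (z • M) = F z from rfl, h] at step
    exact step.symm
  have hder : HasDerivAt (fun z : ℂ => T * exp (z • M) - exp (z • M) * T)
      (T * (M * exp ((0:ℂ) • M)) - (M * exp ((0:ℂ) • M)) * T) 0 :=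
    ((hasDerivAt_exp_smul_const' (𝕂 := ℂ) M 0).const_mul T).sub
      ((hasDerivAt_exp_smul_const' (𝕂 := ℂ) M 0).mul_const T)
  have hzero : (fun z : ℂ => T * exp (z • M) - exp (z • M) * T) = fun _ => (0 : _) := by
    funext z
    rw [hcommexp z, sub_self]
  rw [hzero] at hder
  have huniq := hder.unique (hasDerivAt_const _ _)
  have hfin : T * M - M * T = 0 := by
    simpa [zero_smul, exp_zero, mul_one] using huniq
  exact (sub_eq_zero.mp hfin).symm


lemma main [T2Space Ω] (A : Subalgebra ℂ C(Ω, ℂ))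
    (hsep : ∀ x y : Ω, x ≠ y → ∃ f ∈ A, f x ≠ f y)
    (P : Lp ℂ 2 μ →L[ℂ] Lp ℂ 2 μ)
    (hrange : ∀ ξ, P ξ ∈ closure {ξ : Lp ℂ 2 μ | ∃ f ∈ A, (⇑ξ : Ω → ℂ) =ᵐ[μ] ⇑f})
    (hproj : ∀ ξ ∈ closure {ξ : Lp ℂ 2 μ | ∃ f ∈ A, (⇑ξ : Ω → ℂ) =ᵐ[μ] ⇑f}, P ξ = ξ)
    (hAcomm : ∀ f ∈ A, mulHom μ f * P = P * mulHom μ f) [μ.WeaklyRegular] :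
    closure {ξ : Lp ℂ 2 μ | ∃ f ∈ A, (⇑ξ : Ω → ℂ) =ᵐ[μ] ⇑f} = Set.univ := by
  set Φ := mulHom μ with hΦ
  set K := closure {ξ : Lp ℂ 2 μ | ∃ f ∈ A, (⇑ξ : Ω → ℂ) =ᵐ[μ] ⇑f} with hK
  -- the commutant of `P` inside `C(Ω, ℂ)` is a closed star subalgebra
  set S0 : Subalgebra ℂ C(Ω, ℂ) := (Subalgebra.centralizer ℂ {P}).comap Φ with hS0
  have hmemS0 : ∀ g : C(Ω, ℂ), g ∈ S0 ↔ P * Φ g = Φ g * P := by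
    intro g
    rw [hS0, Subalgebra.mem_comap, Subalgebra.mem_centralizer_iff]
    constructor
    · intro h; exact h P rfl
    · intro h b hb
      rw [Set.mem_singleton_iff] at hb
      subst hb; exact h
  set S : StarSubalgebra ℂ C(Ω, ℂ) :=
    { toSubalgebra := S0
      star_mem' := fun {g} hg => by
        have h1 : P * Φ g = Φ g * P := (hmemS0 g).mp hg
        exact (hmemS0 (star g)).mpr (fuglede μ P g h1.symm).symm } with hS
  have hS_sep : S.SeparatesPoints := by
    intro x y hxy
    obtain ⟨f, hfA, hf⟩ := hsep x y hxy
    exact ⟨⇑f, ⟨f, (hmemS0 f).mpr (hAcomm f hfA).symm, rfl⟩, hf⟩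
  have hS_closed : IsClosed (S : Set C(Ω, ℂ)) := by
    have hset : (S : Set C(Ω, ℂ)) = {g | P * Φ g = Φ g * P} := by
      ext g
      exact hmemS0 g
    rw [hset]
    exact isClosed_eq (continuous_const.mul (continuous_mulHom μ))
      ((continuous_mulHom μ).mul continuous_const)
  have hS_top : ∀ g : C(Ω, ℂ), Φ g * P = P * Φ g := by
    intro g
    have htop := ContinuousMap.starSubalgebra_topologicalClosure_eq_top_of_separatesPoints S hS_sep
    have h1 : g ∈ S.topologicalClosure := by rw [htop]; exact StarSubalgebra.mem_top
    have h2 : g ∈ closure (S : Set C(Ω, ℂ)) := by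
      rw [← StarSubalgebra.topologicalClosure_coe]
      exact h1
    rw [hS_closed.closure_eq] at h2
    exact ((hmemS0 g).mp h2).symm
  -- the constant function 1 lies in K
  set e : Lp ℂ 2 μ := ContinuousMap.toLp 2 μ ℂ (1 : C(Ω, ℂ)) with he
  have he_mem : e ∈ K := subset_closure ⟨1, A.one_mem, ContinuousMap.coeFn_toLp μ (1 : C(Ω, ℂ)) (𝕜 := ℂ)⟩
  have htoLp_mem : ∀ g : C(Ω, ℂ), (ContinuousMap.toLp 2 μ ℂ g : Lp ℂ 2 μ) ∈ K := by
    intro g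
    have hPe : P e = e := hproj e he_mem
    have h1 : P (Φ g e) = Φ g e := by
      have h := congrArg (fun (T : Lp ℂ 2 μ →L[ℂ] Lp ℂ 2 μ) => T e) (hS_top g)
      simp only [ContinuousLinearMap.mul_apply] at h
      rw [hPe] at h
      exact h.symm
    have h2 : Φ g e = ContinuousMap.toLp 2 μ ℂ g := by
      apply Lp.ext (p := 2)
      filter_upwards [coeFn_mulOp μ g e, ContinuousMap.coeFn_toLp μ (1 : C(Ω, ℂ)) (𝕜 := ℂ) (p := 2),
        ContinuousMap.coeFn_toLp μ g (𝕜 := ℂ) (p := 2)] with x hx h1x hgx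
      rw [show ⇑(Φ g e) x = g x * e x from hx, hgx, h1x]
      simp
    rw [← h2, ← h1]
    exact hrange (Φ g e)
  refine Set.eq_univ_of_univ_subset ?_
  have hsub : Set.range (⇑(ContinuousMap.toLp (E := ℂ) 2 μ ℂ)) ⊆ K := by
    rintro _ ⟨g, rfl⟩
    exact htoLp_mem g
  have hdense : DenseRange (⇑(ContinuousMap.toLp (E := ℂ) 2 μ ℂ)) :=
    ContinuousMap.toLp_denseRange (E := ℂ) (p := 2) μ ℂ (by norm_num)
  calc Set.univ = closure (Set.range (⇑(ContinuousMap.toLp (E := ℂ) 2 μ ℂ))) :=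
        hdense.closure_range.symm
    _ ⊆ K := closure_minimal hsub isClosed_closure

end SheinAux
end

open SheinAux in
/-- Analytic core of Sheĭnberg's theorem: let `K` be the closure of a closed unital
point-separating subalgebra `A` of `C(Ω)` in `H = L²(|ν|)`, and suppose there is a bounded
projection `P : H → H` with range `K` commuting with multiplication by every `f ∈ A`.
Then `K = H`. -/
theorem stmt12 {Ω : Type*} [TopologicalSpace Ω] [CompactSpace Ω] [T2Space Ω]
    [MeasurableSpace Ω] [BorelSpace Ω] (ν : ComplexRegularBorelMeasure Ω)
    (A : Subalgebra ℂ C(Ω, ℂ)) (hA : IsClosed (A : Set C(Ω, ℂ)))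
    (hsep : ∀ x y : Ω, x ≠ y → ∃ f ∈ A, f x ≠ f y)
    (P : Lp ℂ 2 ν.variation →L[ℂ] Lp ℂ 2 ν.variation)
    (hrange : ∀ ξ, P ξ ∈ closure {ξ : Lp ℂ 2 ν.variation |
      ∃ f ∈ A, (⇑ξ : Ω → ℂ) =ᵐ[ν.variation] ⇑f})
    (hproj : ∀ ξ ∈ closure {ξ : Lp ℂ 2 ν.variation |
      ∃ f ∈ A, (⇑ξ : Ω → ℂ) =ᵐ[ν.variation] ⇑f}, P ξ = ξ)
    (hcomm : ∀ f ∈ A, ∀ T : Lp ℂ 2 ν.variation →L[ℂ] Lp ℂ 2 ν.variation,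
      IsMulOp ν.variation (⇑f) T → T ∘L P = P ∘L T) :
    closure {ξ : Lp ℂ 2 ν.variation | ∃ f ∈ A, (⇑ξ : Ω → ℂ) =ᵐ[ν.variation] ⇑f} =
      Set.univ := by
  haveI : IsFiniteMeasure ν.variation := ν.finite
  haveI : ν.variation.Regular := ν.regular
  refine SheinAux.main ν.variation A hsep P hrange hproj ?_
  intro f hf
  have h := hcomm f hf (SheinAux.mulHom ν.variation f) (SheinAux.isMulOp_mulHom ν.variation f)
  rwa [← ContinuousLinearMap.mul_def, ← ContinuousLinearMap.mul_def] at h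
end

section
/- Let Ω be a compact Hausdorff space, ν a complex regular Borel measure on Ω annihilating a closed unital point-separating subalgebra A of C(Ω), and suppose there exists a bounded projection P from L²(|ν|) onto the closure of A in L²(|ν|) commuting with multiplication by every element of A. Then ν = 0. -/
open MeasureTheory

/-- The integral of a function against the complex measure. -/
noncomputable def ComplexRegularBorelMeasure.integral {Ω : Type*} [TopologicalSpace Ω]
    [MeasurableSpace Ω] (ν : ComplexRegularBorelMeasure Ω) (f : Ω → ℂ) : ℂ :=
  ∫ x, f x * ν.polar x ∂ν.variation

open NormedSpace
open scoped ENNReal InnerProductSpace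

section Fuglede

theorem fuglede' {𝔸 : Type*} [NormedRing 𝔸] [StarRing 𝔸] [CStarRing 𝔸]
    [NormedAlgebra ℂ 𝔸] [CompleteSpace 𝔸] [StarModule ℂ 𝔸]
    (hone : ‖(1 : 𝔸)‖ ≤ 1)
    {N T : 𝔸} (hN : Commute (star N) N) (h : Commute T N) : Commute T (star N) := by
  let +nondep : NormedAlgebra ℚ 𝔸 := .restrictScalars ℚ ℂ 𝔸
  -- T commutes with exp(c • N)
  have hTe : ∀ c : ℂ, Commute T (exp (c • N)) := fun c => ((h.smul_right c).exp_right)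
  -- exponentials of commuting elements
  set F : ℂ → 𝔸 := fun z => exp ((-z) • star N) * T * exp (z • star N) with hF
  have hdiff : Differentiable ℂ F := by
    have d1 : Differentiable ℂ fun z : ℂ => exp (z • star N) :=
      fun z => (hasDerivAt_exp_smul_const (star N) z).differentiableAt
    have d2 : Differentiable ℂ fun z : ℂ => exp ((-z) • star N) :=
      d1.comp (differentiable_neg)
    exact (d2.mul (differentiable_const T)).mul d1
  have key : ∀ z : ℂ, F z = exp ((-z) • star N + (starRingEnd ℂ z) • N) * T *
      exp (-((-z) • star N + (starRingEnd ℂ z) • N)) := by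
    intro z
    have hc : Commute ((-z) • star N) ((starRingEnd ℂ z) • N) :=
      (hN.smul_left _).smul_right _
    have e1 : exp ((-z) • star N + (starRingEnd ℂ z) • N) =
        exp ((-z) • star N) * exp ((starRingEnd ℂ z) • N) := exp_add_of_commute hc
    have e2 : exp (-((-z) • star N + (starRingEnd ℂ z) • N)) =
        exp ((- (starRingEnd ℂ z)) • N) * exp (z • star N) := by
      rw [neg_add, show -((-z) • star N) = z • star N by simp, show
        -((starRingEnd ℂ z) • N) = (-(starRingEnd ℂ z)) • N by simp, add_comm]
      exact exp_add_of_commute ((hN.smul_right _).smul_left _).symm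
    have hT : T = exp ((starRingEnd ℂ z) • N) * T * exp ((-(starRingEnd ℂ z)) • N) := by
      rw [← (hTe _).eq, mul_assoc, ← exp_add_of_commute ((Commute.refl N).smul_left _ |>.smul_right _)]
      rw [show (starRingEnd ℂ z) • N + (-(starRingEnd ℂ z)) • N = 0 by module, exp_zero, mul_one]
    rw [e1, e2, hF]
    calc exp ((-z) • star N) * T * exp (z • star N)
        = exp ((-z) • star N) * (exp ((starRingEnd ℂ z) • N) * T *
            exp ((-(starRingEnd ℂ z)) • N)) * exp (z • star N) := by rw [← hT]
      _ = exp ((-z) • star N) * exp ((starRingEnd ℂ z) • N) * T *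
            (exp ((-(starRingEnd ℂ z)) • N) * exp (z • star N)) := by
          simp only [mul_assoc]
  have hskew : ∀ z : ℂ, ((-z) • star N + (starRingEnd ℂ z) • N) ∈ skewAdjoint 𝔸 := by
    intro z
    rw [skewAdjoint.mem_iff, star_add, star_smul, star_smul, star_star,
      show star (-z) = -(starRingEnd ℂ z) by rw [star_neg]; rfl,
      show star (starRingEnd ℂ z) = z from star_star z]
    module
  have hUnorm : ∀ S : 𝔸, S ∈ skewAdjoint 𝔸 → ‖exp S‖ ≤ 1 := by
    intro S hS
    have hu : exp S ∈ unitary 𝔸 := exp_mem_unitary_of_mem_skewAdjoint hS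
    have h1 : star (exp S) * exp S = 1 := (Unitary.mem_iff.mp hu).1
    have h2 : ‖exp S‖ * ‖exp S‖ = ‖star (exp S) * exp S‖ :=
      (CStarRing.norm_star_mul_self).symm
    rw [h1] at h2
    nlinarith [norm_nonneg (exp S), hone]
  have hbdd : ∀ z : ℂ, ‖F z‖ ≤ ‖T‖ := by
    intro z
    rw [key z]
    have hs := hskew z
    have hs' : -((-z) • star N + (starRingEnd ℂ z) • N) ∈ skewAdjoint 𝔸 := neg_mem hs
    calc ‖exp ((-z) • star N + (starRingEnd ℂ z) • N) * T *
          exp (-((-z) • star N + (starRingEnd ℂ z) • N))‖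
        ≤ ‖exp ((-z) • star N + (starRingEnd ℂ z) • N) * T‖ *
          ‖exp (-((-z) • star N + (starRingEnd ℂ z) • N))‖ := norm_mul_le _ _
      _ ≤ ‖exp ((-z) • star N + (starRingEnd ℂ z) • N)‖ * ‖T‖ * 1 := by
          gcongr
          · exact norm_mul_le _ _
          · exact hUnorm _ hs'
      _ ≤ 1 * ‖T‖ * 1 := by gcongr; exact hUnorm _ hs
      _ = ‖T‖ := by ring
  have hconst : ∀ z : ℂ, F z = F 0 := by
    intro z
    apply hdiff.apply_eq_apply_of_bounded
    exact isBounded_iff_forall_norm_le.2 ⟨‖T‖, by rintro x ⟨z, rfl⟩; exact hbdd z⟩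
  have hF0 : F 0 = T := by simp [hF, exp_zero]
  -- hence T * exp (z • star N) = exp (z • star N) * T
  have hcomm' : ∀ z : ℂ, T * exp (z • star N) = exp (z • star N) * T := by
    intro z
    have h1 : exp ((-z) • star N) * T * exp (z • star N) = T := by
      have := hconst z; rw [hF0] at this; exact this
    have h2 : exp (z • star N) * (exp ((-z) • star N) * T * exp (z • star N)) =
        exp (z • star N) * T := by rw [h1]
    calc T * exp (z • star N)
        = exp (z • star N) * exp ((-z) • star N) * T * exp (z • star N) := by
          rw [← exp_add_of_commute ((Commute.refl (star N)).smul_left _ |>.smul_right _),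
            show z • star N + (-z) • star N = 0 by module, exp_zero, one_mul]
      _ = exp (z • star N) * T := by rw [← h2]; simp only [mul_assoc]
  -- differentiate at 0
  have d1 : HasDerivAt (fun z : ℂ => T * exp (z • star N)) (T * star N) 0 := by
    have := (hasDerivAt_exp_smul_const (star N) (0 : ℂ)).const_mul T
    simpa using this
  have d2 : HasDerivAt (fun z : ℂ => T * exp (z • star N)) (star N * T) 0 := by
    have := (hasDerivAt_exp_smul_const' (star N) (0 : ℂ)).mul_const T
    have h' : (fun z : ℂ => exp (z • star N) * T) = fun z : ℂ => T * exp (z • star N) :=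
      funext fun z => (hcomm' z).symm
    rw [h'] at this
    simpa using this
  exact (d1.unique d2)

end Fuglede

section MulOp

variable {Ω : Type*} [TopologicalSpace Ω] [CompactSpace Ω] [MeasurableSpace Ω]
  [OpensMeasurableSpace Ω] (μ : Measure Ω)

theorem memℒp_top_cm (g : C(Ω, ℂ)) : MemLp (⇑g) ∞ μ :=
  memLp_top_of_bound g.continuous.aestronglyMeasurable ‖g‖
    (Filter.Eventually.of_forall fun x => g.norm_coe_le_norm x)

theorem memℒp_mul_cm (g : C(Ω, ℂ)) (ξ : Lp ℂ 2 μ) :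
    MemLp (fun x => g x * ξ x) 2 μ :=
  (Lp.memLp ξ).mul' (memℒp_top_cm μ g)

/-- Multiplication by a continuous function, as a bounded operator on `L²`. -/
noncomputable def mulOp (g : C(Ω, ℂ)) : Lp ℂ 2 μ →L[ℂ] Lp ℂ 2 μ := by
  refine LinearMap.mkContinuous
    { toFun := fun ξ => (memℒp_mul_cm μ g ξ).toLp _
      map_add' := ?_
      map_smul' := ?_ } ‖g‖ ?_
  · intro ξ η
    apply Lp.ext
    filter_upwards [(memℒp_mul_cm μ g (ξ + η)).coeFn_toLp,
      (memℒp_mul_cm μ g ξ).coeFn_toLp, (memℒp_mul_cm μ g η).coeFn_toLp,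
      Lp.coeFn_add ξ η,
      Lp.coeFn_add ((memℒp_mul_cm μ g ξ).toLp _) ((memℒp_mul_cm μ g η).toLp _)]
      with x h1 h2 h3 h4 h5
    rw [h1, h5, Pi.add_apply, h2, h3, h4, Pi.add_apply, mul_add]
  · intro c ξ
    apply Lp.ext
    filter_upwards [(memℒp_mul_cm μ g (c • ξ)).coeFn_toLp,
      (memℒp_mul_cm μ g ξ).coeFn_toLp, Lp.coeFn_smul c ξ,
      Lp.coeFn_smul c ((memℒp_mul_cm μ g ξ).toLp _)] with x h1 h2 h3 h4
    rw [RingHom.id_apply, h1, h4, Pi.smul_apply, h2, h3, Pi.smul_apply, smul_eq_mul,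
      smul_eq_mul]
    ring
  · intro ξ
    simp only [LinearMap.coe_mk, AddHom.coe_mk, Lp.norm_toLp]
    have hb : eLpNorm (fun x => g x * ξ x) 2 μ ≤
        ENNReal.ofReal ‖g‖ * eLpNorm (⇑ξ) 2 μ := by
      have h := eLpNorm_smul_le_eLpNorm_top_mul_eLpNorm 2 (Lp.aestronglyMeasurable ξ) (⇑g)
      refine le_trans h ?_
      gcongr
      refine le_trans (eLpNorm_le_of_ae_bound
        (Filter.Eventually.of_forall fun x => g.norm_coe_le_norm x)) ?_
      simp
    calc (eLpNorm (fun x => g x * ξ x) 2 μ).toReal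
        ≤ (ENNReal.ofReal ‖g‖ * eLpNorm (⇑ξ) 2 μ).toReal := by
          refine ENNReal.toReal_mono ?_ hb
          exact ENNReal.mul_ne_top ENNReal.ofReal_ne_top (Lp.eLpNorm_ne_top ξ)
      _ = ‖g‖ * ‖ξ‖ := by
          rw [ENNReal.toReal_mul, ENNReal.toReal_ofReal (norm_nonneg g), Lp.norm_def]

theorem mulOp_isMulOp (g : C(Ω, ℂ)) (ξ : Lp ℂ 2 μ) :
    (⇑(mulOp μ g ξ) : Ω → ℂ) =ᵐ[μ] fun x => g x * ξ x :=
  (memℒp_mul_cm μ g ξ).coeFn_toLp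

theorem mulOp_mul (g h : C(Ω, ℂ)) : mulOp μ (g * h) = mulOp μ g * mulOp μ h := by
  ext ξ
  have h1 := mulOp_isMulOp μ (g * h) ξ
  have h2 := mulOp_isMulOp μ h ξ
  have h3 := mulOp_isMulOp μ g (mulOp μ h ξ)
  rw [ContinuousLinearMap.mul_apply]
  filter_upwards [h1, h2, h3] with x e1 e2 e3
  rw [e1, e3, e2]
  simp [mul_assoc]

theorem mulOp_one : mulOp μ (1 : C(Ω, ℂ)) = 1 := by
  ext ξ
  filter_upwards [mulOp_isMulOp μ 1 ξ] with x e1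
  simpa using e1

theorem mulOp_add (g h : C(Ω, ℂ)) : mulOp μ (g + h) = mulOp μ g + mulOp μ h := by
  ext ξ
  filter_upwards [mulOp_isMulOp μ (g + h) ξ, mulOp_isMulOp μ g ξ, mulOp_isMulOp μ h ξ,
    Lp.coeFn_add (mulOp μ g ξ) (mulOp μ h ξ)] with x e1 e2 e3 e4
  rw [ContinuousLinearMap.add_apply, e1, e4, Pi.add_apply, e2, e3]
  simp [add_mul]

theorem mulOp_smul (c : ℂ) (g : C(Ω, ℂ)) : mulOp μ (c • g) = c • mulOp μ g := by
  ext ξ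
  filter_upwards [mulOp_isMulOp μ (c • g) ξ, mulOp_isMulOp μ g ξ,
    Lp.coeFn_smul c (mulOp μ g ξ)] with x e1 e2 e3
  rw [ContinuousLinearMap.smul_apply, e1, e3, Pi.smul_apply, e2]
  simp [mul_assoc]

theorem mulOp_star (g : C(Ω, ℂ)) : star (mulOp μ g) = mulOp μ (star g) := by
  rw [ContinuousLinearMap.star_eq_adjoint]
  symm
  rw [ContinuousLinearMap.eq_adjoint_iff]
  intro ξ η
  rw [L2.inner_def, L2.inner_def]
  refine integral_congr_ae ?_
  filter_upwards [mulOp_isMulOp μ (star g) ξ, mulOp_isMulOp μ g η] with x e1 e2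
  rw [e1, e2]
  simp only [RCLike.inner_apply, ContinuousMap.star_apply, RCLike.star_def, map_mul,
    Complex.conj_conj]
  ring

theorem mulOp_commute (g h : C(Ω, ℂ)) : Commute (mulOp μ g) (mulOp μ h) := by
  unfold Commute SemiconjBy
  rw [← mulOp_mul, ← mulOp_mul, mul_comm]

end MulOp

/-- If a complex regular Borel measure `ν` annihilates a closed unital point-separating
subalgebra `A` of `C(Ω)` and there is a bounded projection from `L²(|ν|)` onto the closure
of `A` commuting with multiplication by every element of `A`, then `ν = 0`. -/
theorem stmt13 {Ω : Type*} [TopologicalSpace Ω] [CompactSpace Ω] [T2Space Ω]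
    [MeasurableSpace Ω] [BorelSpace Ω] (ν : ComplexRegularBorelMeasure Ω)
    (A : Subalgebra ℂ C(Ω, ℂ)) (hA : IsClosed (A : Set C(Ω, ℂ)))
    (hsep : ∀ x y : Ω, x ≠ y → ∃ f ∈ A, f x ≠ f y)
    (hann : ∀ f ∈ A, ν.integral (⇑f) = 0)
    (P : Lp ℂ 2 ν.variation →L[ℂ] Lp ℂ 2 ν.variation)
    (hrange : ∀ ξ, P ξ ∈ closure {ξ : Lp ℂ 2 ν.variation |
      ∃ f ∈ A, (⇑ξ : Ω → ℂ) =ᵐ[ν.variation] ⇑f})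
    (hproj : ∀ ξ ∈ closure {ξ : Lp ℂ 2 ν.variation |
      ∃ f ∈ A, (⇑ξ : Ω → ℂ) =ᵐ[ν.variation] ⇑f}, P ξ = ξ)
    (hcomm : ∀ f ∈ A, ∀ T : Lp ℂ 2 ν.variation →L[ℂ] Lp ℂ 2 ν.variation,
      IsMulOp ν.variation (⇑f) T → T ∘L P = P ∘L T) :
    ν.variation = 0 := by
  haveI : IsFiniteMeasure ν.variation := ν.finite
  haveI : ν.variation.Regular := ν.regular
  -- the conjugate of the polar function, as an element of L²
  have hpconj_meas : AEStronglyMeasurable (fun x => (starRingEnd ℂ) (ν.polar x)) ν.variation :=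
    (continuous_star.measurable.comp ν.measurable_polar).aestronglyMeasurable
  have hk0mem : MemLp (fun x => (starRingEnd ℂ) (ν.polar x)) 2 ν.variation := by
    refine MemLp.of_bound hpconj_meas 1 ?_
    filter_upwards [ν.norm_polar] with x hx
    simp [hx]
  set k₀ : Lp ℂ 2 ν.variation := hk0mem.toLp _ with hk₀
  -- the inner product against k₀ computes the integral against the complex measure
  have hinner : ∀ ξ : Lp ℂ 2 ν.variation, ⟪k₀, ξ⟫_ℂ = ∫ x, ν.polar x * ξ x ∂ν.variation := by
    intro ξ
    rw [L2.inner_def]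
    refine integral_congr_ae ?_
    filter_upwards [hk0mem.coeFn_toLp] with x hx
    rw [RCLike.inner_apply, hx]
    simp
    ring
  -- the annihilation condition extends to the L²-closure of A
  set S : Set (Lp ℂ 2 ν.variation) := {ξ | ∃ f ∈ A, (⇑ξ : Ω → ℂ) =ᵐ[ν.variation] ⇑f} with hS
  have hSann : ∀ ξ ∈ closure S, ⟪k₀, ξ⟫_ℂ = 0 := by
    have hcl : IsClosed {ξ : Lp ℂ 2 ν.variation | ⟪k₀, ξ⟫_ℂ = 0} :=
      isClosed_eq (innerSL ℂ k₀).continuous continuous_const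
    intro ξ hξ
    refine closure_minimal ?_ hcl hξ
    rintro η ⟨f, hf, hη⟩
    show ⟪k₀, η⟫_ℂ = 0
    have he : ⟪k₀, η⟫_ℂ = ν.integral ⇑f := by
      rw [hinner]
      refine integral_congr_ae ?_
      filter_upwards [hη] with x hx
      rw [hx]; ring
    rw [he, hann f hf]
  -- the adjoint of P kills k₀
  set Padj := ContinuousLinearMap.adjoint P with hPadjdef
  have hPadj : Padj k₀ = 0 := by
    rw [← inner_self_eq_zero (𝕜 := ℂ)]
    rw [hPadjdef, ContinuousLinearMap.adjoint_inner_left]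
    exact hSann _ (hrange _)
  -- both P and its adjoint commute with multiplication by elements of the star algebra
  -- generated by A
  have hone : ‖(1 : Lp ℂ 2 ν.variation →L[ℂ] Lp ℂ 2 ν.variation)‖ ≤ 1 := by
    rw [ContinuousLinearMap.one_def]; exact ContinuousLinearMap.norm_id_le
  have hQstar : ∀ g : C(Ω, ℂ),
      (Commute (mulOp ν.variation g) P ∧ Commute (mulOp ν.variation g) Padj) →
      (Commute (mulOp ν.variation (star g)) P ∧ Commute (mulOp ν.variation (star g)) Padj) := by
    intro g hgc
    obtain ⟨h1, h2⟩ := hgc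
    rw [← mulOp_star]
    constructor
    · have := congrArg star h2.eq
      rw [star_mul, star_mul] at this
      rw [hPadjdef, ← ContinuousLinearMap.star_eq_adjoint, star_star] at this
      exact this.symm
    · have := congrArg star h1.eq
      rw [star_mul, star_mul] at this
      rw [hPadjdef, ← ContinuousLinearMap.star_eq_adjoint]
      exact this.symm
  have hQA : ∀ f : C(Ω, ℂ), f ∈ A →
      Commute (mulOp ν.variation f) P ∧ Commute (mulOp ν.variation f) Padj := by
    intro f hf
    have hc : mulOp ν.variation f ∘L P = P ∘L mulOp ν.variation f :=
      hcomm f hf (mulOp ν.variation f) (mulOp_isMulOp ν.variation f)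
    have c1 : Commute (mulOp ν.variation f) P := hc
    have hnorm : Commute (star (mulOp ν.variation f)) (mulOp ν.variation f) := by
      rw [mulOp_star]; exact mulOp_commute ν.variation _ _
    have fug : Commute P (star (mulOp ν.variation f)) := fuglede' hone hnorm c1.symm
    refine ⟨c1, ?_⟩
    have := congrArg star fug.eq
    rw [star_mul, star_mul, star_star] at this
    rw [hPadjdef, ← ContinuousLinearMap.star_eq_adjoint]
    exact this
  have hQB : ∀ g ∈ StarAlgebra.adjoin ℂ (A : Set C(Ω, ℂ)),
      Commute (mulOp ν.variation g) P ∧ Commute (mulOp ν.variation g) Padj := by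
    intro g hg
    have hg' : g ∈ Algebra.adjoin ℂ ((A : Set C(Ω, ℂ)) ∪ star (A : Set C(Ω, ℂ))) := hg
    clear hg
    induction hg' using Algebra.adjoin_induction with
    | mem x hx =>
      rcases hx with hx | hx
      · exact hQA x hx
      · have hxs : star x ∈ A := hx
        have := hQstar (star x) (hQA _ hxs)
        rwa [star_star] at this
    | algebraMap r =>
      rw [Algebra.algebraMap_eq_smul_one, mulOp_smul, mulOp_one]
      exact ⟨(Commute.one_left P).smul_left r, (Commute.one_left Padj).smul_left r⟩
    | add x y hx hy ihx ihy =>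
      rw [mulOp_add]
      exact ⟨ihx.1.add_left ihy.1, ihx.2.add_left ihy.2⟩
    | mul x y hx hy ihx ihy =>
      rw [mulOp_mul]
      exact ⟨ihx.1.mul_left ihy.1, ihx.2.mul_left ihy.2⟩
  -- the element 1 of L² is fixed by P
  set one : Lp ℂ 2 ν.variation := (ContinuousMap.toLp (E := ℂ) 2 ν.variation ℂ) 1 with honedef
  have honeS : one ∈ S :=
    ⟨1, one_mem A, ContinuousMap.coeFn_toLp (p := 2) (𝕜 := ℂ) ν.variation 1⟩
  have hPone : P one = one := hproj one (subset_closure honeS)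
  -- the complex measure annihilates the star algebra generated by A
  have hBzero : ∀ g ∈ StarAlgebra.adjoin ℂ (A : Set C(Ω, ℂ)),
      ∫ x, g x * ν.polar x ∂ν.variation = 0 := by
    intro g hg
    have hsg : star g ∈ StarAlgebra.adjoin ℂ (A : Set C(Ω, ℂ)) := star_mem hg
    have c2 : Commute (mulOp ν.variation (star g)) Padj := (hQB _ hsg).2
    have e1 : ⟪mulOp ν.variation (star g) k₀, one⟫_ℂ = ∫ x, g x * ν.polar x ∂ν.variation := by
      rw [L2.inner_def]
      refine integral_congr_ae ?_
      filter_upwards [mulOp_isMulOp ν.variation (star g) k₀, hk0mem.coeFn_toLp,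
        ContinuousMap.coeFn_toLp (p := 2) (𝕜 := ℂ) ν.variation (1 : C(Ω, ℂ))] with x h1 h2 h3
      rw [RCLike.inner_apply, h1, h2, h3]
      simp only [ContinuousMap.star_apply, RCLike.star_def, map_mul, Complex.conj_conj,
        ContinuousMap.one_apply, mul_one, one_mul]
    have e2 : ⟪mulOp ν.variation (star g) k₀, one⟫_ℂ = 0 := by
      calc ⟪mulOp ν.variation (star g) k₀, one⟫_ℂ
          = ⟪mulOp ν.variation (star g) k₀, P one⟫_ℂ := by rw [hPone]
        _ = ⟪Padj (mulOp ν.variation (star g) k₀), one⟫_ℂ := by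
            rw [hPadjdef, ContinuousLinearMap.adjoint_inner_left]
        _ = ⟪mulOp ν.variation (star g) (Padj k₀), one⟫_ℂ := by
            have hcm := congrFun (congrArg (DFunLike.coe) c2.eq) k₀
            simp only [ContinuousLinearMap.mul_apply] at hcm
            rw [hcm]
        _ = 0 := by rw [hPadj, map_zero, inner_zero_left]
    rw [← e1, e2]
  -- by Stone-Weierstrass, the star algebra generated by A is dense in C(Ω)
  have hBsep : (StarAlgebra.adjoin ℂ (A : Set C(Ω, ℂ))).SeparatesPoints := by
    intro x y hxy
    obtain ⟨f, hf, hne⟩ := hsep x y hxy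
    exact ⟨f, ⟨f, StarAlgebra.subset_adjoin ℂ _ hf, rfl⟩, hne⟩
  have htop : (StarAlgebra.adjoin ℂ (A : Set C(Ω, ℂ))).topologicalClosure = ⊤ :=
    ContinuousMap.starSubalgebra_topologicalClosure_eq_top_of_separatesPoints _ hBsep
  have hall : ∀ g : C(Ω, ℂ),
      ⟪k₀, (ContinuousMap.toLp (E := ℂ) 2 ν.variation ℂ) g⟫_ℂ = 0 := by
    have hcl : IsClosed
        {g : C(Ω, ℂ) | ⟪k₀, (ContinuousMap.toLp (E := ℂ) 2 ν.variation ℂ) g⟫_ℂ = 0} :=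
      isClosed_eq ((innerSL ℂ k₀).continuous.comp
        (ContinuousMap.toLp (E := ℂ) 2 ν.variation ℂ).continuous) continuous_const
    have hsub : ((StarAlgebra.adjoin ℂ (A : Set C(Ω, ℂ))) : Set C(Ω, ℂ)) ⊆
        {g : C(Ω, ℂ) | ⟪k₀, (ContinuousMap.toLp (E := ℂ) 2 ν.variation ℂ) g⟫_ℂ = 0} := by
      intro g hg
      have he : ⟪k₀, (ContinuousMap.toLp (E := ℂ) 2 ν.variation ℂ) g⟫_ℂ =
          ∫ x, g x * ν.polar x ∂ν.variation := by
        rw [hinner]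
        refine integral_congr_ae ?_
        filter_upwards [ContinuousMap.coeFn_toLp (p := 2) (𝕜 := ℂ) ν.variation g] with x hx
        rw [hx]; ring
      rw [Set.mem_setOf_eq, he]
      exact hBzero g hg
    intro g
    have hdense : g ∈ closure ((StarAlgebra.adjoin ℂ (A : Set C(Ω, ℂ))) : Set C(Ω, ℂ)) := by
      have h2 : g ∈ (StarAlgebra.adjoin ℂ (A : Set C(Ω, ℂ))).topologicalClosure := by
        rw [htop]; exact StarSubalgebra.mem_top
      exact h2
    exact closure_minimal hsub hcl hdense
  -- by density of continuous functions in L², k₀ = 0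
  have hk0zero : k₀ = 0 := by
    have hdr : DenseRange (ContinuousMap.toLp (E := ℂ) 2 ν.variation ℂ :
        C(Ω, ℂ) →L[ℂ] Lp ℂ 2 ν.variation) :=
      ContinuousMap.toLp_denseRange (p := 2) (𝕜 := ℂ) ℂ ν.variation ENNReal.ofNat_ne_top
    have hzero : ∀ ξ : Lp ℂ 2 ν.variation, ⟪k₀, ξ⟫_ℂ = 0 := by
      have hcl : IsClosed {ξ : Lp ℂ 2 ν.variation | ⟪k₀, ξ⟫_ℂ = 0} :=
        isClosed_eq (innerSL ℂ k₀).continuous continuous_const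
      intro ξ
      have hmem : ξ ∈ closure (Set.range (ContinuousMap.toLp (E := ℂ) 2 ν.variation ℂ :
          C(Ω, ℂ) →L[ℂ] Lp ℂ 2 ν.variation)) := hdr ξ
      refine closure_minimal ?_ hcl hmem
      rintro η ⟨g, rfl⟩
      exact hall g
    exact inner_self_eq_zero.mp (hzero k₀)
  -- conclude
  have hfalse : ∀ᵐ x ∂ν.variation, False := by
    have h1 : (fun x => (starRingEnd ℂ) (ν.polar x)) =ᵐ[ν.variation] (0 : Ω → ℂ) := by
      have hc := hk0mem.coeFn_toLp
      rw [← hk₀, hk0zero] at hc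
      exact (hc.symm).trans (Lp.coeFn_zero ℂ 2 ν.variation)
    filter_upwards [h1, ν.norm_polar] with x hx1 hx2
    have hz : ν.polar x = 0 := by
      have := congrArg (starRingEnd ℂ) hx1
      simpa using this
    rw [hz] at hx2
    simp at hx2
  rw [Filter.eventually_false_iff_eq_bot, ae_eq_bot] at hfalse
  exact hfalse
end

section
/- Let Ω be a compact Hausdorff space, ν a complex regular Borel measure on Ω, and A a subalgebra of C(Ω) with ∫ f dν = 0 for all f ∈ A. If 1 ∈ A (so that in particular ν(Ω) = 0) and the closure of A in L²(|ν|) is all of L²(|ν|), then |ν|(Ω) = 0. -/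
open MeasureTheory

/-- If a unital subalgebra `A` of `C(Ω)` is annihilated by the complex regular Borel
measure `ν` and the closure of `A` in `L²(|ν|)` is all of `L²(|ν|)`, then `|ν|(Ω) = 0`. -/
theorem stmt17 {Ω : Type*} [TopologicalSpace Ω] [CompactSpace Ω] [T2Space Ω]
    [MeasurableSpace Ω] [BorelSpace Ω] (ν : ComplexRegularBorelMeasure Ω)
    (A : Subalgebra ℂ C(Ω, ℂ))
    (hann : ∀ f ∈ A, ν.integral (⇑f) = 0)
    (hdense : closure {ξ : Lp ℂ 2 ν.variation |
      ∃ f ∈ A, (⇑ξ : Ω → ℂ) =ᵐ[ν.variation] ⇑f} = Set.univ) :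
    ν.variation Set.univ = 0 := by
  have hfin := ν.finite
  have hmeas := ν.measurable_polar
  have hg : MemLp (fun x => starRingEnd ℂ (ν.polar x)) 2 ν.variation := by
    apply MemLp.of_bound (((Complex.conjLIE.continuous.measurable.comp hmeas)).aestronglyMeasurable) 1
    filter_upwards [ν.norm_polar] with x hx
    simpa using hx.le
  set g : Lp ℂ 2 ν.variation := hg.toLp _ with hgdef
  have h1 : (⇑g : Ω → ℂ) =ᵐ[ν.variation] fun x => starRingEnd ℂ (ν.polar x) :=
    hg.coeFn_toLp
  have hzero : ∀ ξ ∈ {ξ : Lp ℂ 2 ν.variation |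
      ∃ f ∈ A, (⇑ξ : Ω → ℂ) =ᵐ[ν.variation] ⇑f}, (inner ℂ g ξ : ℂ) = 0 := by
    rintro ξ ⟨f, hfA, hξf⟩
    rw [MeasureTheory.L2.inner_def]
    have heq : ∫ x, (inner ℂ (g x) (ξ x) : ℂ) ∂ν.variation
        = ∫ x, f x * ν.polar x ∂ν.variation := by
      apply integral_congr_ae
      filter_upwards [h1, hξf] with x h1x h2x
      simp [h1x, h2x, RCLike.inner_apply, mul_comm]
    rw [heq]
    exact hann f hfA
  have hclosed : IsClosed {ξ : Lp ℂ 2 ν.variation | (inner ℂ g ξ : ℂ) = 0} :=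
    isClosed_eq (continuous_const.inner continuous_id) continuous_const
  have hall : (inner ℂ g g : ℂ) = 0 := by
    have : g ∈ closure {ξ : Lp ℂ 2 ν.variation |
        ∃ f ∈ A, (⇑ξ : Ω → ℂ) =ᵐ[ν.variation] ⇑f} := by
      rw [hdense]; exact Set.mem_univ g
    exact closure_minimal hzero hclosed this
  have hg0 : g = 0 := inner_self_eq_zero.mp hall
  have hae : (fun x => starRingEnd ℂ (ν.polar x)) =ᵐ[ν.variation] 0 := by
    refine h1.symm.trans ?_
    rw [hg0]
    exact Lp.coeFn_zero ℂ 2 ν.variation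
  have hfalse : ∀ᵐ x ∂ν.variation, False := by
    filter_upwards [hae, ν.norm_polar] with x hx hnx
    have : ‖starRingEnd ℂ (ν.polar x)‖ = 1 := by simpa using hnx
    rw [hx] at this
    simp at this
  rw [ae_iff] at hfalse
  simpa using hfalse
end
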